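/- Let k be an integrable Mercer kernel on ℤ≥0 with RKHS H, assume every element of H is absolutely summable, and let m ∈ ℤ≥0. Then the series Σ_{t ≥ m} k(·,t) converges in H to an element f, its norm satisfies ‖f‖_H² = Σ_{s ≥ m} Σ_{t ≥ m} k(s,t), and for every g ∈ H one has Σ_{t ≥ m} g(t) = ⟨f, g⟩_H. -/

import Mathlib

open scoped InnerProductSpace

/-- For an integrable Mercer kernel `k` on `ℤ≥0` with RKHS `H` whose
elements are all absolutely summable, and `m ∈ ℤ≥0`, the series `∑_{t ≥ m} k(·,t)`
converges in `H` to some `f` with `‖f‖² = ∑_{s ≥ m} ∑_{t ≥ m} k(s,t)` and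
`∑_{t ≥ m} g(t) = ⟪f, g⟫` for all `g ∈ H`. -/
theorem stmt_7
    {H : Type*} [NormedAddCommGroup H] [InnerProductSpace ℝ H] [CompleteSpace H]
    (k : ℕ → ℕ → ℝ)
    (hsymm : ∀ s t, k s t = k t s)
    (hpsd : ∀ (n : ℕ) (t : Fin n → ℕ) (a : Fin n → ℝ),
      0 ≤ ∑ i, ∑ j, a i * a j * k (t i) (t j))
    (hint : Summable fun p : ℕ × ℕ => |k p.1 p.2|)
    (ι : H →ₗ[ℝ] (ℕ → ℝ)) (hι : Function.Injective ι)
    (K : ℕ → H) (hK : ∀ t s, ι (K t) s = k t s)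
    (hrep : ∀ (g : H) (t : ℕ), ⟪g, K t⟫_ℝ = ι g t)
    (hl1 : ∀ g : H, Summable fun t => |ι g t|)
    (m : ℕ) :
    ∃ f : H, HasSum (fun t : ℕ => K (m + t)) f ∧
      ‖f‖ ^ 2 = (∑' s : ℕ, ∑' t : ℕ, k (m + s) (m + t)) ∧
      ∀ g : H, ∑' t : ℕ, ι g (m + t) = ⟪f, g⟫_ℝ := by
  -- squared norm of a finite partial sum
  have hnorm : ∀ F : Finset ℕ,
      ⟪∑ i ∈ F, K (m + i), ∑ j ∈ F, K (m + j)⟫_ℝ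
        = ∑ i ∈ F, ∑ j ∈ F, k (m + i) (m + j) := by
    intro F
    rw [sum_inner]
    refine Finset.sum_congr rfl fun i _ => ?_
    rw [inner_sum]
    refine Finset.sum_congr rfl fun j _ => ?_
    rw [hrep, hK]
  have h2 : Summable fun p : ℕ × ℕ => |k (m + p.1) (m + p.2)| := by
    have hinj : Function.Injective (fun p : ℕ × ℕ => (m + p.1, m + p.2)) := by
      intro p q h
      have e1 : m + p.1 = m + q.1 := congrArg Prod.fst h
      have e2 : m + p.2 = m + q.2 := congrArg Prod.snd h
      exact Prod.ext (by omega) (by omega)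
    have := Summable.comp_injective (i := fun p : ℕ × ℕ => (m + p.1, m + p.2)) hint hinj
    exact this
  -- Summability of the K-series
  have hsum : Summable fun t : ℕ => K (m + t) := by
    rw [summable_iff_vanishing]
    intro e he
    obtain ⟨ε, hε, hball⟩ := Metric.mem_nhds_iff.mp he
    obtain ⟨S, hS⟩ := (summable_iff_vanishing.mp h2) (Metric.ball 0 (ε ^ 2))
      (Metric.ball_mem_nhds _ (by positivity))
    refine ⟨S.image Prod.fst ∪ S.image Prod.snd, fun t ht => ?_⟩
    have hdisj : Disjoint (t ×ˢ t) S := by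
      rw [Finset.disjoint_left]
      rintro ⟨a, b⟩ hab hS'
      rw [Finset.mem_product] at hab
      exact (Finset.disjoint_left.mp ht) hab.1
        (Finset.mem_union_left _ (Finset.mem_image_of_mem Prod.fst hS'))
    have hsmall := hS (t ×ˢ t) hdisj
    rw [Metric.mem_ball, dist_zero_right, Real.norm_eq_abs] at hsmall
    have hle : ∑ p ∈ t ×ˢ t, k (m + p.1) (m + p.2)
        ≤ ∑ p ∈ t ×ˢ t, |k (m + p.1) (m + p.2)| :=
      Finset.sum_le_sum fun p _ => le_abs_self _
    have habs : ∑ p ∈ t ×ˢ t, |k (m + p.1) (m + p.2)| < ε ^ 2 :=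
      lt_of_abs_lt hsmall
    have hsq : ‖∑ i ∈ t, K (m + i)‖ ^ 2 < ε ^ 2 := by
      rw [← real_inner_self_eq_norm_sq, hnorm, ← Finset.sum_product']
      exact lt_of_le_of_lt hle habs
    apply hball
    rw [Metric.mem_ball, dist_zero_right]
    exact lt_of_pow_lt_pow_left₀ 2 hε.le hsq
  obtain ⟨f, hf⟩ := hsum
  -- inner products with f
  have hinner : ∀ g : H, HasSum (fun t : ℕ => ι g (m + t)) ⟪g, f⟫_ℝ := by
    intro g
    have := (innerSL ℝ g).hasSum hf
    simpa only [innerSL_apply_apply, hrep] using this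
  have hιf : ∀ n : ℕ, ι f n = ∑' t : ℕ, k n (m + t) := by
    intro n
    have h1 : ι f n = ⟪K n, f⟫_ℝ := by rw [real_inner_comm, hrep]
    have h2' := (hinner (K n)).tsum_eq
    simp only [hK] at h2'
    rw [h1, ← h2']
  refine ⟨f, hf, ?_, fun g => ?_⟩
  · have h3 := (hinner f).tsum_eq
    rw [real_inner_self_eq_norm_sq] at h3
    rw [← h3]
    exact tsum_congr fun s => hιf (m + s)
  · rw [(hinner g).tsum_eq, real_inner_comm]
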